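/- Let s ≥ 2, r₂ = … = r_s = 1. For x ∈ ℂ^N, the following are equivalent: (i) R_x(z) ≠ 0 for all z in the open polydisc 𝔻^s; (ii) x belongs to the closure of the generalized tetrablock 𝔼_E. -/

import Mathlib

open Set Finset

/-- The set `A(r₁,…,r_s)` of nonzero multi-indices `α` with `0 ≤ α_j ≤ r_j`. -/
def idxSet (s : ℕ) (r : Fin s → ℕ) : Finset (Fin s → ℕ) :=
  (Fintype.piFinset fun j => Finset.range (r j + 1)).erase 0

/-- The polynomial `R_x(z) = 1 + Σ_{α ∈ A} (−1)^{|α|} x_α z^α`. -/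
noncomputable def tetraR (s : ℕ) (r : Fin s → ℕ) (x : idxSet s r → ℂ) (z : Fin s → ℂ) : ℂ :=
  1 + ∑ α : idxSet s r, (-1 : ℂ) ^ (∑ j, (α : Fin s → ℕ) j) * x α *
    ∏ j, z j ^ (α : Fin s → ℕ) j

/-- The generalized tetrablock `𝔼_E = {x ∈ ℂ^N : R_x(z) ≠ 0 ∀ z ∈ 𝔻̄^s}`. -/
noncomputable def genTetrablock (s : ℕ) (r : Fin s → ℕ) : Set (idxSet s r → ℂ) :=
  {x | ∀ z : Fin s → ℂ, (∀ j, ‖z j‖ ≤ 1) → tetraR s r x z ≠ 0}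


lemma abs_multiset_prod (s : Multiset ℂ) : ‖s.prod‖ = (s.map (‖·‖)).prod := by
  induction s using Multiset.induction_on with
  | empty => simp
  | cons a s ih => simp [ih]

open Polynomial in
lemma aux_one_var (p : Polynomial ℂ) (h0 : p.eval 0 = 1)
    (hnz : ∀ t : ℂ, ‖t‖ ≤ 1 → p.eval t ≠ 0) (t : ℂ) (ht : ‖t‖ < 1) :
    (1 - ‖t‖) ^ (Multiset.card p.roots) ≤ ‖p.eval t‖ := by
  have hsplit : Splits p := IsAlgClosed.splits p
  have heq := hsplit.eq_prod_roots
  have hroot : ∀ a ∈ p.roots, 1 < ‖a‖ := by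
    intro a ha
    by_contra h
    push_neg at h
    exact hnz a h ((mem_roots'.mp ha).2)
  have habs : ∀ u : ℂ, ‖p.eval u‖
      = ‖p.leadingCoeff‖ * (p.roots.map fun a => ‖u - a‖).prod := by
    intro u
    conv_lhs => rw [heq]
    rw [eval_mul, eval_C, norm_mul, eval_multiset_prod, Multiset.map_map, abs_multiset_prod,
      Multiset.map_map]
    congr 1
    apply congrArg Multiset.prod
    refine Multiset.map_congr rfl (fun a _ => ?_)
    simp [Function.comp]
  have h1 : ‖p.leadingCoeff‖ * (p.roots.map fun a => ‖a‖).prod = 1 := by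
    have h2 := habs 0
    simp only [h0, norm_one, zero_sub, norm_neg] at h2
    exact h2.symm
  have hkey : (p.roots.map fun a => (1 - ‖t‖) * ‖a‖).prod
      ≤ (p.roots.map fun a => ‖t - a‖).prod := by
    apply Multiset.prod_map_le_prod_map₀
    · intro a ha
      have := hroot a ha
      nlinarith [norm_nonneg a]
    · intro a ha
      have h2 := hroot a ha
      have h3 : ‖a‖ - ‖t‖ ≤ ‖t - a‖ := by
        have := norm_sub_norm_le a t
        rw [show a - t = -(t - a) by ring, norm_neg] at this
        simpa using this
      nlinarith [norm_nonneg a, norm_nonneg t]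
  have hmul : (p.roots.map fun a => (1 - ‖t‖) * ‖a‖).prod
      = (1 - ‖t‖) ^ (Multiset.card p.roots) * (p.roots.map fun a => ‖a‖).prod := by
    rw [Multiset.prod_map_mul]
    congr 1
    simp [Multiset.map_const', Multiset.prod_replicate]
  rw [habs t]
  calc (1 - ‖t‖) ^ (Multiset.card p.roots)
      = (1 - ‖t‖) ^ (Multiset.card p.roots)
        * (‖p.leadingCoeff‖ * (p.roots.map fun a => ‖a‖).prod) := by
        rw [h1, mul_one]
    _ = ‖p.leadingCoeff‖ * ((p.roots.map fun a => (1 - ‖t‖) * ‖a‖).prod) := by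
        rw [hmul]; ring
    _ ≤ ‖p.leadingCoeff‖ * (p.roots.map fun a => ‖t - a‖).prod :=
        mul_le_mul_of_nonneg_left hkey (norm_nonneg _)

lemma idx_sum_pos {s : ℕ} {r : Fin s → ℕ} (α : idxSet s r) : 0 < ∑ j, (α : Fin s → ℕ) j := by
  obtain ⟨α, hα⟩ := α
  rw [idxSet, Finset.mem_erase] at hα
  rcases Nat.eq_zero_or_pos (∑ j, α j) with h | h
  · exact absurd (funext fun j => Finset.sum_eq_zero_iff.mp h j (Finset.mem_univ j)) hα.1
  · exact h

lemma idx_sum_le {s : ℕ} {r : Fin s → ℕ} (α : idxSet s r) :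
    ∑ j, (α : Fin s → ℕ) j ≤ ∑ j, r j := by
  obtain ⟨α, hα⟩ := α
  rw [idxSet, Finset.mem_erase, Fintype.mem_piFinset] at hα
  exact Finset.sum_le_sum fun j _ => Nat.lt_succ_iff.mp (Finset.mem_range.mp (hα.2 j))

lemma tetraR_continuous (s : ℕ) (r : Fin s → ℕ) (z : Fin s → ℂ) :
    Continuous fun y : idxSet s r → ℂ => tetraR s r y z := by
  unfold tetraR
  refine continuous_const.add (continuous_finset_sum _ fun α _ => ?_)
  exact (continuous_const.mul (continuous_apply α)).mul continuous_const

/-- scaling identity -/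
lemma tetraR_scale (s : ℕ) (r : Fin s → ℕ) (y : idxSet s r → ℂ) (lam : ℂ) (z : Fin s → ℂ) :
    tetraR s r (fun α => lam ^ (∑ j, (α : Fin s → ℕ) j) * y α) z
      = tetraR s r y (fun j => lam * z j) := by
  unfold tetraR
  congr 1
  refine Finset.sum_congr rfl fun α _ => ?_
  rw [Finset.prod_congr rfl (fun j _ => mul_pow lam (z j) _), Finset.prod_mul_distrib,
    Finset.prod_pow_eq_pow_sum]
  ring


/-- For the block structure `(r₁, 1, …, 1)`: `x` lies in the closure of `𝔼_E` iff
`R_x(z) ≠ 0` for all `z` in the open polydisc `𝔻^s`. -/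
theorem mem_closure_genTetrablock_iff
    (n s : ℕ) (hn : 2 ≤ n) (hs : s ≤ n) (hs2 : 2 ≤ s)
    (r : Fin s → ℕ) (hr : ∀ j, 1 ≤ r j) (hsum : ∑ j, r j = n)
    (htail : ∀ j : Fin s, 0 < (j : ℕ) → r j = 1)
    (x : idxSet s r → ℂ) :
    (∀ z : Fin s → ℂ, (∀ j, ‖z j‖ < 1) → tetraR s r x z ≠ 0) ↔
      x ∈ closure (genTetrablock s r) := by
  constructor
  · -- (i) → closure
    intro h
    have key : ∀ lam : ℝ, 0 ≤ lam → lam < 1 →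
        (fun α : idxSet s r => (lam : ℂ) ^ (∑ j, (α : Fin s → ℕ) j) * x α)
          ∈ genTetrablock s r := by
      intro lam h0 h1 z hz
      rw [tetraR_scale]
      refine h _ fun j => ?_
      rw [norm_mul, Complex.norm_real, Real.norm_of_nonneg h0]
      calc lam * ‖z j‖ ≤ lam * 1 :=
            mul_le_mul_of_nonneg_left (hz j) h0
        _ < 1 := by linarith
    have hlam : Filter.Tendsto (fun k : ℕ => 1 - 1 / ((k : ℝ) + 1)) Filter.atTop (nhds 1) := by
      have := tendsto_one_div_add_atTop_nhds_zero_nat (𝕜 := ℝ)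
      simpa using Filter.Tendsto.const_sub 1 this
    refine mem_closure_of_tendsto (f := fun k : ℕ =>
      fun α : idxSet s r => ((1 - 1 / ((k : ℝ) + 1) : ℝ) : ℂ) ^ (∑ j, (α : Fin s → ℕ) j) * x α)
      (b := Filter.atTop) ?_ ?_
    · rw [tendsto_pi_nhds]
      intro α
      have h2 : Filter.Tendsto (fun k : ℕ => ((1 - 1 / ((k : ℝ) + 1) : ℝ) : ℂ))
          Filter.atTop (nhds 1) := by
        rw [show (1 : ℂ) = ((1 : ℝ) : ℂ) by norm_num]
        exact (Complex.continuous_ofReal.tendsto 1).comp hlam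
      have h3 : Filter.Tendsto
          (fun k : ℕ => ((1 - 1 / ((k : ℝ) + 1) : ℝ) : ℂ) ^ (∑ j, (α : Fin s → ℕ) j) * x α)
          Filter.atTop (nhds (1 ^ (∑ j, (α : Fin s → ℕ) j) * x α)) :=
        (h2.pow _).mul tendsto_const_nhds
      simpa using h3
    · filter_upwards with k
      refine key _ ?_ ?_
      · have : 1 / ((k : ℝ) + 1) ≤ 1 := by
          rw [div_le_one (by positivity)]
          linarith [Nat.cast_nonneg (α := ℝ) k]
        linarith
      · have : 0 < 1 / ((k : ℝ) + 1) := by positivity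
        linarith
  · -- closure → (i)
    intro hx z hz
    have hspos : 0 < s := by omega
    haveI : Nonempty (Fin s) := Fin.pos_iff_nonempty.mp hspos
    set M : ℝ := Finset.univ.sup' Finset.univ_nonempty (fun j => ‖z j‖) with hM
    set c : ℝ := max M (1 / 2) with hc
    have hc1 : c < 1 := by
      refine max_lt ?_ (by norm_num)
      rw [hM, Finset.sup'_lt_iff]
      exact fun j _ => hz j
    have hc0 : (0 : ℝ) < c := lt_of_lt_of_le (by norm_num) (le_max_right _ _)
    have hcz : ∀ j, ‖z j‖ ≤ c := by
      intro j
      refine le_trans ?_ (le_max_left M (1 / 2))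
      rw [hM]
      exact Finset.le_sup' (fun j => ‖z j‖) (Finset.mem_univ j)
    have hbound : ∀ y ∈ genTetrablock s r,
        (1 - c) ^ n ≤ ‖tetraR s r y z‖ := by
      intro y hy
      classical
      set q : Polynomial ℂ := 1 + ∑ α : idxSet s r,
        Polynomial.C ((-1 : ℂ) ^ (∑ j, (α : Fin s → ℕ) j) * y α *
          ∏ j, (z j / (c : ℂ)) ^ ((α : Fin s → ℕ) j)) *
          Polynomial.X ^ (∑ j, (α : Fin s → ℕ) j) with hq
      have heval : ∀ t : ℂ, q.eval t = tetraR s r y (fun j => t * (z j / (c : ℂ))) := by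
        intro t
        rw [hq, tetraR]
        simp only [Polynomial.eval_add, Polynomial.eval_one, Polynomial.eval_finset_sum,
          Polynomial.eval_mul, Polynomial.eval_pow, Polynomial.eval_C, Polynomial.eval_X]
        congr 1
        refine Finset.sum_congr rfl fun α _ => ?_
        rw [Finset.prod_congr rfl (fun j _ => mul_pow t (z j / (c : ℂ)) _),
          Finset.prod_mul_distrib, Finset.prod_pow_eq_pow_sum]
        ring
      have h0 : q.eval 0 = 1 := by
        rw [heval, tetraR]
        have hz0 : ∑ α : idxSet s r, (-1 : ℂ) ^ (∑ j, (α : Fin s → ℕ) j) * y α *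
            ∏ j, ((0 : ℂ) * (z j / (c : ℂ))) ^ ((α : Fin s → ℕ) j) = 0 := by
          refine Finset.sum_eq_zero fun α _ => ?_
          obtain ⟨j0, hj0⟩ : ∃ j, (α : Fin s → ℕ) j ≠ 0 := by
            by_contra hcon
            push_neg at hcon
            have := idx_sum_pos α
            simp [hcon] at this
          rw [Finset.prod_eq_zero (Finset.mem_univ j0)]
          · ring
          · simp [zero_pow hj0]
        rw [hz0, add_zero]
      have hnz : ∀ t : ℂ, ‖t‖ ≤ 1 → q.eval t ≠ 0 := by
        intro t ht
        rw [heval]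
        refine hy _ fun j => ?_
        rw [norm_mul, norm_div, Complex.norm_real, Real.norm_of_nonneg hc0.le]
        have h2 : ‖z j‖ / c ≤ 1 := by
          rw [div_le_one hc0]; exact hcz j
        have := mul_le_mul ht h2 (by positivity) zero_le_one
        simpa using this
      have hdeg : q.natDegree ≤ n := by
        rw [hq]
        refine le_trans (Polynomial.natDegree_add_le _ _) ?_
        simp only [Polynomial.natDegree_one, max_le_iff]
        constructor
        · omega
        · refine le_trans (Polynomial.natDegree_sum_le _ _) ?_
          rw [Finset.fold_max_le]
          refine ⟨by omega, fun α _ => ?_⟩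
          refine le_trans (Polynomial.natDegree_mul_le) ?_
          simp only [Polynomial.natDegree_C, zero_add]
          refine le_trans (Polynomial.natDegree_pow_le) ?_
          simp only [Polynomial.natDegree_X, mul_one]
          rw [← hsum]
          exact idx_sum_le α
      have habsc : ‖((c : ℝ) : ℂ)‖ < 1 := by
        rw [Complex.norm_real, Real.norm_of_nonneg hc0.le]; exact hc1
      have hb := aux_one_var q h0 hnz ((c : ℝ) : ℂ) habsc
      have hqc : q.eval ((c : ℝ) : ℂ) = tetraR s r y z := by
        rw [heval]
        congr 1
        funext j
        rw [mul_div_cancel₀]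
        exact_mod_cast hc0.ne'
      rw [hqc, Complex.norm_real, Real.norm_of_nonneg hc0.le] at hb
      refine le_trans ?_ hb
      refine pow_le_pow_of_le_one (by linarith) (by linarith) ?_
      exact le_trans (Polynomial.card_roots' q) hdeg
    have hsub : closure (genTetrablock s r) ⊆
        {y : idxSet s r → ℂ | (1 - c) ^ n ≤ ‖tetraR s r y z‖} := by
      refine closure_minimal hbound ?_
      exact isClosed_le continuous_const
        (continuous_norm.comp (tetraR_continuous s r z))
    have hle := hsub hx
    intro h0
    rw [Set.mem_setOf_eq, h0, norm_zero] at hle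
    have hpos : (0:ℝ) < (1 - c) ^ n := pow_pos (by linarith) n
    linarith
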